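/- Let R ⊆ S_n be the top-k partial ranking determined by distinct items a_1,…,a_k, and let σ ∈ R. Then the antithetic permutation A_R(σ) lies in R, the Kendall distance satisfies d(σ, A_R(σ)) = C(n−k, 2), and A_R(σ) is the unique maximizer of the Kendall distance from σ within R: for every τ ∈ R, d(σ, τ) ≤ C(n−k, 2), with equality if and only if τ = A_R(σ). -/

import Mathlib

section AuxKendall

open Finset

lemma aux_card_ltPairs (m : ℕ) :
    (Finset.univ.filter fun q : Fin m × Fin m => q.1 < q.2).card = m.choose 2 := by
  rw [Finset.card_eq_sum_card_fiberwise (f := Prod.snd) (t := Finset.univ) (fun _ _ => mem_univ _)]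
  have h : ∀ b : Fin m,
      ((Finset.univ.filter fun q : Fin m × Fin m => q.1 < q.2).filter
        fun q => q.snd = b).card = (b : ℕ) := by
    intro b
    rw [Finset.card_nbij' (i := fun q => q.1) (j := fun u => (u, b)) (t := Finset.Iio b)]
    · exact Fin.card_Iio b
    · intro q hq; simp only [mem_coe, mem_filter, mem_univ, true_and] at hq
      simp [mem_Iio, hq.2 ▸ hq.1]
    · intro u hu; simp only [mem_coe, mem_Iio] at hu; simp [hu]
    · intro q hq; simp only [mem_coe, mem_filter, mem_univ, true_and] at hq
      exact Prod.ext rfl hq.2.symm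
    · intro u _; rfl
  simp only [h]
  rw [Fin.sum_univ_eq_sum_range (fun i => i), Finset.sum_range_id, Nat.choose_two_right]

lemma aux_card_tailPairs {n : ℕ} (k : ℕ) :
    (Finset.univ.filter fun q : Fin n × Fin n =>
      k ≤ (q.1 : ℕ) ∧ q.1 < q.2).card = (n - k).choose 2 := by
  rcases le_or_gt n k with h | h
  · have h0 : n - k = 0 := by omega
    rw [h0]
    convert Finset.card_empty
    rw [Finset.eq_empty_iff_forall_notMem]
    intro q hq
    simp only [mem_filter, mem_univ, true_and] at hq
    have := q.1.isLt; omega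
    rfl
  · rw [← aux_card_ltPairs (n - k)]
    apply Finset.card_nbij'
      (i := fun q : Fin n × Fin n =>
        ((⟨min ((q.1 : ℕ) - k) 0 + ((q.1 : ℕ) - k), by have := q.1.isLt; omega⟩ : Fin (n - k)),
         (⟨(q.2 : ℕ) - k, by have := q.2.isLt; omega⟩ : Fin (n - k))))
      (j := fun r : Fin (n - k) × Fin (n - k) =>
        ((⟨(r.1 : ℕ) + k, by have := r.1.isLt; omega⟩ : Fin n),
         (⟨(r.2 : ℕ) + k, by have := r.2.isLt; omega⟩ : Fin n)))
    · intro q hq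
      simp only [mem_coe, mem_filter, mem_univ, true_and, Fin.lt_def] at hq ⊢
      omega
    · intro r hr
      simp only [mem_coe, mem_filter, mem_univ, true_and, Fin.lt_def] at hr ⊢
      have := r.1.isLt; have := r.2.isLt; omega
    · intro q hq
      simp only [mem_coe, mem_filter, mem_univ, true_and] at hq
      ext <;> simp <;> omega
    · intro r hr
      ext <;> simp

end AuxKendall

/-- The Kendall (tau) distance between two permutations of `Fin n`:
the number of pairs `(x, y)` with `x < y` on which `σ⁻¹` and `τ⁻¹`
disagree in relative order. -/
def kendallDist {n : ℕ} (σ τ : Equiv.Perm (Fin n)) : ℕ :=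
  (Finset.univ.filter (fun p : Fin n × Fin n =>
    p.1 < p.2 ∧ ¬((σ⁻¹ p.1 < σ⁻¹ p.2) ↔ (τ⁻¹ p.1 < τ⁻¹ p.2)))).card

/-- The top-`k` partial ranking determined by the items `a 0, …, a (k-1)`:
the set of full rankings (permutations) `σ` with `σ i = a i` for the first
`k` positions. -/
def topkFinset {n k : ℕ} (hk : k ≤ n) (a : Fin k → Fin n) :
    Finset (Equiv.Perm (Fin n)) :=
  Finset.univ.filter fun σ => ∀ i : Fin k, σ (Fin.castLE hk i) = a i

/-- The permutation of `Fin n` fixing the first `k` positions and reversing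
the order of the remaining `n - k` positions. -/
def revAfter (n k : ℕ) : Equiv.Perm (Fin n) :=
  Function.Involutive.toPerm
    (fun p => if _h : (p : ℕ) < k then p
      else ⟨n + k - 1 - (p : ℕ), by have := p.isLt; omega⟩)
    (by
      intro p
      have hp := p.isLt
      by_cases h : (p : ℕ) < k
      · simp [h]
      · have h2 : ¬ (n + k - 1 - (p : ℕ) < k) := by omega
        simp only [dif_neg h, dif_neg h2]
        ext
        simp
        omega)

/-- The antithetic permutation of `σ` relative to a top-`k` partial ranking:
the first `k` positions are unchanged and the remaining positions are
reversed, i.e. `A σ (k+j) = σ (n+1-j)` (in 1-indexed notation). -/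
def antithetic (n k : ℕ) (σ : Equiv.Perm (Fin n)) : Equiv.Perm (Fin n) :=
  σ * revAfter n k

theorem Equiv.Perm.inv_apply_self {α : Type*} (f : Equiv.Perm α) (x : α) : f⁻¹ (f x) = x :=
  Equiv.symm_apply_apply f x

theorem Equiv.Perm.apply_inv_self {α : Type*} (f : Equiv.Perm α) (x : α) : f (f⁻¹ x) = x :=
  Equiv.apply_symm_apply f x

section AuxPerm

open Finset

lemma aux_kendall_eq {n : ℕ} (σ τ : Equiv.Perm (Fin n)) :
    kendallDist σ τ = (Finset.univ.filter fun q : Fin n × Fin n =>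
      q.1 < q.2 ∧ τ⁻¹ (σ q.2) < τ⁻¹ (σ q.1)).card := by
  unfold kendallDist
  apply Finset.card_nbij'
    (i := fun p : Fin n × Fin n =>
      if σ⁻¹ p.1 < σ⁻¹ p.2 then (σ⁻¹ p.1, σ⁻¹ p.2) else (σ⁻¹ p.2, σ⁻¹ p.1))
    (j := fun q : Fin n × Fin n =>
      if σ q.1 < σ q.2 then (σ q.1, σ q.2) else (σ q.2, σ q.1))
  · intro p hp
    simp only [mem_coe, mem_filter, mem_univ, true_and] at hp ⊢
    obtain ⟨hp1, hp2⟩ := hp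
    have hne : σ⁻¹ p.1 ≠ σ⁻¹ p.2 := fun h => hp1.ne (σ⁻¹.injective h)
    by_cases h : σ⁻¹ p.1 < σ⁻¹ p.2
    · have h2 : ¬ τ⁻¹ p.1 < τ⁻¹ p.2 := fun h2 => hp2 ⟨fun _ => h2, fun _ => h⟩
      have hne2 : τ⁻¹ p.1 ≠ τ⁻¹ p.2 := fun h => hp1.ne (τ⁻¹.injective h)
      simp only [if_pos h, Equiv.Perm.apply_inv_self]
      exact ⟨h, lt_of_le_of_ne (not_lt.mp h2) hne2.symm⟩
    · have h2 : τ⁻¹ p.1 < τ⁻¹ p.2 := by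
        by_contra h3
        exact hp2 ⟨fun h4 => absurd h4 h, fun h4 => absurd h4 h3⟩
      simp only [if_neg h, Equiv.Perm.apply_inv_self]
      exact ⟨lt_of_le_of_ne (not_lt.mp h) hne.symm, h2⟩
  · intro q hq
    simp only [mem_coe, mem_filter, mem_univ, true_and] at hq ⊢
    obtain ⟨hq1, hq2⟩ := hq
    have hne : σ q.1 ≠ σ q.2 := fun h => hq1.ne (σ.injective h)
    by_cases h : σ q.1 < σ q.2
    · simp only [if_pos h, Equiv.Perm.inv_apply_self]
      exact ⟨h, fun hiff => absurd (hiff.mp hq1) (not_lt.mpr hq2.le)⟩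
    · simp only [if_neg h, Equiv.Perm.inv_apply_self]
      refine ⟨lt_of_le_of_ne (not_lt.mp h) hne.symm, fun hiff => ?_⟩
      exact absurd (hiff.mpr hq2) (not_lt.mpr hq1.le)
  · intro p hp
    simp only [mem_coe, mem_filter, mem_univ, true_and] at hp
    by_cases h : σ⁻¹ p.1 < σ⁻¹ p.2
    · simp only [if_pos h, Equiv.Perm.apply_inv_self, if_pos hp.1]
    · have hlt : ¬ σ (σ⁻¹ p.2) < σ (σ⁻¹ p.1) := by
        simp only [Equiv.Perm.apply_inv_self]; exact not_lt.mpr hp.1.le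
      simp only [if_neg h, if_neg hlt, Equiv.Perm.apply_inv_self]
      rw [if_neg (not_lt.mpr hp.1.le)]
  · intro q hq
    simp only [mem_coe, mem_filter, mem_univ, true_and] at hq
    by_cases h : σ q.1 < σ q.2
    · simp only [if_pos h, Equiv.Perm.inv_apply_self, if_pos hq.1]
    · have hlt : ¬ σ⁻¹ (σ q.2) < σ⁻¹ (σ q.1) := by
        simp only [Equiv.Perm.inv_apply_self]; exact not_lt.mpr hq.1.le
      simp only [if_neg h, if_neg hlt, Equiv.Perm.inv_apply_self]
      rw [if_neg (not_lt.mpr hq.1.le)]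

lemma aux_revAfter_apply_lt {n k : ℕ} (p : Fin n) (h : (p : ℕ) < k) :
    revAfter n k p = p := by
  show (if _h : (p : ℕ) < k then p else ⟨n + k - 1 - (p : ℕ), by have := p.isLt; omega⟩) = p
  rw [dif_pos h]

lemma aux_revAfter_apply_ge {n k : ℕ} (p : Fin n) (h : ¬ (p : ℕ) < k) :
    ((revAfter n k p : Fin n) : ℕ) = n + k - 1 - (p : ℕ) := by
  show ((if _h : (p : ℕ) < k then p else ⟨n + k - 1 - (p : ℕ), by have := p.isLt; omega⟩ : Fin n) : ℕ) = _
  rw [dif_neg h]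

variable {n k : ℕ} (π : Equiv.Perm (Fin n)) (hπ : ∀ p : Fin n, (p : ℕ) < k → π p = p)

include hπ in
lemma aux_tail_stable : ∀ p : Fin n, k ≤ (p : ℕ) → k ≤ ((π p : Fin n) : ℕ) := by
  intro p hp
  by_contra h
  have h2 : π (π p) = π p := hπ _ (not_le.mp h)
  have := π.injective h2
  omega

include hπ in
lemma aux_invSet_subset :
    (Finset.univ.filter fun q : Fin n × Fin n => q.1 < q.2 ∧ π q.2 < π q.1) ⊆
    (Finset.univ.filter fun q : Fin n × Fin n => k ≤ (q.1 : ℕ) ∧ q.1 < q.2) := by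
  intro q hq
  simp only [mem_filter, mem_univ, true_and] at hq ⊢
  obtain ⟨hq1, hq2⟩ := hq
  refine ⟨?_, hq1⟩
  by_contra h
  have e1 : π q.1 = q.1 := hπ _ (not_le.mp h)
  rcases lt_or_ge (q.2 : ℕ) k with h2 | h2
  · have e2 : π q.2 = q.2 := hπ _ h2
    rw [e1, e2] at hq2
    exact absurd hq1 (not_lt.mpr hq2.le)
  · have := aux_tail_stable π hπ q.2 h2
    rw [e1] at hq2
    have : ((π q.2 : Fin n) : ℕ) < (q.1 : ℕ) := hq2
    omega

lemma aux_invSet_rev :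
    (Finset.univ.filter fun q : Fin n × Fin n =>
      q.1 < q.2 ∧ revAfter n k q.2 < revAfter n k q.1) =
    (Finset.univ.filter fun q : Fin n × Fin n => k ≤ (q.1 : ℕ) ∧ q.1 < q.2) := by
  apply Finset.Subset.antisymm
  · exact aux_invSet_subset _ (fun p h => aux_revAfter_apply_lt p h)
  · intro q hq
    simp only [mem_filter, mem_univ, true_and] at hq ⊢
    obtain ⟨hq1, hq2⟩ := hq
    refine ⟨hq2, ?_⟩
    have l1 : ¬ (q.1 : ℕ) < k := not_lt.mpr hq1
    have l2 : ¬ (q.2 : ℕ) < k := by have : (q.1 : ℕ) < q.2 := hq2; omega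
    have e1 := aux_revAfter_apply_ge (k := k) q.1 l1
    have e2 := aux_revAfter_apply_ge (k := k) q.2 l2
    have hv : (q.1 : ℕ) < (q.2 : ℕ) := hq2
    have h2 := q.2.isLt
    show ((revAfter n k q.2 : Fin n) : ℕ) < ((revAfter n k q.1 : Fin n) : ℕ)
    omega

include hπ in
lemma aux_eq_rev_of_full
    (hfull : ∀ q : Fin n × Fin n, k ≤ (q.1 : ℕ) → q.1 < q.2 → π q.2 < π q.1) :
    π = revAfter n k := by
  ext p
  rcases lt_or_ge (p : ℕ) k with h | h
  · rw [hπ p h, aux_revAfter_apply_lt p h]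
  · have hkn : k < n := lt_of_le_of_lt h p.isLt
    have hπpk : k ≤ ((π p : Fin n) : ℕ) := aux_tail_stable π hπ p h
    have hπpn := (π p).isLt
    have himg : (Finset.Icc (⟨k, hkn⟩ : Fin n) p).image π =
        Finset.Icc (π p) (⟨n - 1, by omega⟩ : Fin n) := by
      apply Finset.Subset.antisymm
      · intro w hw
        simp only [Finset.mem_image, Finset.mem_Icc] at hw ⊢
        obtain ⟨v, ⟨hv1, hv2⟩, rfl⟩ := hw
        constructor
        · rcases eq_or_lt_of_le hv2 with rfl | hv3
          · exact le_refl _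
          · exact le_of_lt (hfull (v, p) (by exact hv1) hv3)
        · rw [Fin.le_def]
          have := (π v).isLt
          simp only []
          omega
      · intro w hw
        simp only [Finset.mem_image, Finset.mem_Icc] at hw ⊢
        obtain ⟨hw1, _⟩ := hw
        refine ⟨π⁻¹ w, ⟨?_, ?_⟩, Equiv.Perm.apply_inv_self π w⟩
        · rw [Fin.le_def]
          simp only []
          by_contra hc
          have hlt2 : ((π⁻¹ w : Fin n) : ℕ) < k := by omega
          have e : π (π⁻¹ w) = π⁻¹ w := hπ _ hlt2
          rw [Equiv.Perm.apply_inv_self] at e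
          have hw1' : ((π p : Fin n) : ℕ) ≤ (w : ℕ) := hw1
          rw [e] at hw1'
          omega
        · by_contra hc
          have hlt : p < π⁻¹ w := not_le.mp hc
          have := hfull (p, π⁻¹ w) h hlt
          rw [Equiv.Perm.apply_inv_self] at this
          exact absurd hw1 (not_le.mpr this)
    have hcard : (p : ℕ) + 1 - k = (n - 1) + 1 - ((π p : Fin n) : ℕ) := by
      have c1 := Finset.card_image_of_injective
        (Finset.Icc (⟨k, hkn⟩ : Fin n) p) π.injective
      rw [himg] at c1
      rw [Fin.card_Icc, Fin.card_Icc] at c1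
      exact c1.symm
    have : ((π p : Fin n) : ℕ) = n + k - 1 - (p : ℕ) := by omega
    have hr := aux_revAfter_apply_ge (k := k) p (not_lt.mpr h)
    omega

end AuxPerm

lemma aux_revAfter_inv (n k : ℕ) : (revAfter n k)⁻¹ = revAfter n k := by
  ext p
  have := (Function.Involutive.toPerm_symm (f := fun p : Fin n =>
    if _h : (p : ℕ) < k then p
    else ⟨n + k - 1 - (p : ℕ), by have := p.isLt; omega⟩)
    (by
      intro p
      have hp := p.isLt
      by_cases h : (p : ℕ) < k
      · simp [h]
      · have h2 : ¬ (n + k - 1 - (p : ℕ) < k) := by omega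
        simp only [dif_neg h, dif_neg h2]
        ext
        simp
        omega))
  rfl

/-- For a top-`k` partial ranking `R` determined by distinct items
`a 0, …, a (k-1)` and `σ ∈ R`: the antithetic permutation `A_R(σ)` lies in
`R`, satisfies `d(σ, A_R(σ)) = C(n−k, 2)`, and is the unique maximizer of the
Kendall distance from `σ` within `R`. -/
theorem antithetic_unique_max {n k : ℕ} (hk : k ≤ n) (a : Fin k → Fin n)
    (ha : Function.Injective a) (σ : Equiv.Perm (Fin n))
    (hσ : σ ∈ topkFinset hk a) :
    antithetic n k σ ∈ topkFinset hk a ∧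
    kendallDist σ (antithetic n k σ) = (n - k).choose 2 ∧
    ∀ τ ∈ topkFinset hk a,
      kendallDist σ τ ≤ (n - k).choose 2 ∧
      (kendallDist σ τ = (n - k).choose 2 ↔ τ = antithetic n k σ) := by
  simp only [topkFinset, Finset.mem_filter, Finset.mem_univ, true_and] at hσ
  -- the key fact for any τ ∈ R : the permutation τ⁻¹ * σ fixes the first k positions
  have key : ∀ τ : Equiv.Perm (Fin n), (∀ i : Fin k, τ (Fin.castLE hk i) = a i) →
      ∀ p : Fin n, (p : ℕ) < k → (τ⁻¹ * σ) p = p := by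
    intro τ hτ p hp
    have hp' : p = Fin.castLE hk ⟨(p : ℕ), hp⟩ := by
      apply Fin.ext; rfl
    rw [hp']
    show τ⁻¹ (σ (Fin.castLE hk ⟨(p : ℕ), hp⟩)) = _
    rw [hσ ⟨(p : ℕ), hp⟩, ← hτ ⟨(p : ℕ), hp⟩, Equiv.Perm.inv_apply_self]
  -- distance formula
  have dist_eq : ∀ τ : Equiv.Perm (Fin n),
      kendallDist σ τ = (Finset.univ.filter fun q : Fin n × Fin n =>
        q.1 < q.2 ∧ (τ⁻¹ * σ) q.2 < (τ⁻¹ * σ) q.1).card := fun τ => aux_kendall_eq σ τ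
  -- antithetic is in R
  have hmem : antithetic n k σ ∈ topkFinset hk a := by
    simp only [topkFinset, Finset.mem_filter, Finset.mem_univ, true_and]
    intro i
    show σ (revAfter n k (Fin.castLE hk i)) = a i
    rw [aux_revAfter_apply_lt (Fin.castLE hk i) (by simpa using i.isLt), hσ i]
  have hmem' : ∀ i : Fin k, antithetic n k σ (Fin.castLE hk i) = a i := by
    simpa only [topkFinset, Finset.mem_filter, Finset.mem_univ, true_and] using hmem
  -- distance to the antithetic permutation
  have hanti : kendallDist σ (antithetic n k σ) = (n - k).choose 2 := by
    rw [dist_eq]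
    have hπ : (antithetic n k σ)⁻¹ * σ = revAfter n k := by
      unfold antithetic
      rw [mul_inv_rev, mul_assoc, inv_mul_cancel, mul_one, aux_revAfter_inv]
    rw [hπ]
    rw [aux_invSet_rev, aux_card_tailPairs]
  refine ⟨hmem, hanti, ?_⟩
  intro τ hτ
  simp only [topkFinset, Finset.mem_filter, Finset.mem_univ, true_and] at hτ
  have hπfix := key τ hτ
  have hsub := aux_invSet_subset (τ⁻¹ * σ) hπfix
  have hle : kendallDist σ τ ≤ (n - k).choose 2 := by
    rw [dist_eq, ← aux_card_tailPairs (n := n) k]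
    exact Finset.card_le_card hsub
  refine ⟨hle, ?_, ?_⟩
  · -- equality implies τ = antithetic
    intro heq
    rw [dist_eq, ← aux_card_tailPairs (n := n) k] at heq
    have hsets := Finset.eq_of_subset_of_card_le hsub (le_of_eq heq.symm)
    have hfull : ∀ q : Fin n × Fin n, k ≤ (q.1 : ℕ) → q.1 < q.2 →
        (τ⁻¹ * σ) q.2 < (τ⁻¹ * σ) q.1 := by
      intro q h1 h2
      have : q ∈ (Finset.univ.filter fun q : Fin n × Fin n =>
          k ≤ (q.1 : ℕ) ∧ q.1 < q.2) := by
        simp only [Finset.mem_filter, Finset.mem_univ, true_and]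
        exact ⟨h1, h2⟩
      rw [← hsets] at this
      simp only [Finset.mem_filter, Finset.mem_univ, true_and] at this
      exact this.2
    have hπrev : τ⁻¹ * σ = revAfter n k := aux_eq_rev_of_full (τ⁻¹ * σ) hπfix hfull
    have : τ = σ * (revAfter n k)⁻¹ := by
      rw [← hπrev]
      group
    rw [this, aux_revAfter_inv]
    rfl
  · -- τ = antithetic implies equality
    intro heq
    rw [heq]
    exact hanti
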